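/- arXiv:2512.18579 — 2 statements merged into one kernel-verified Lean document; each statement's English description precedes it below -/
import Mathlib

section
/- Let g : [0, π/(2 C₁ C₂)) → ℝ be a C¹ function with g(0) = 0, g nonnegative, and satisfying g'(t) ≤ C₁² g(t)² + C₂² for positive constants C₁, C₂. Then for all t < π/(2 C₁ C₂), one has g(t) ≤ (C₂/C₁) · tan(C₁ C₂ t). -/
open Real

/-- Lemma 1.2 of the paper: if `g(0) = 0`, `g` is `C¹` with
`g'(t) ≤ C₁² g(t)² + C₂²`, then `g(t) ≤ (C₂/C₁) tan(C₁ C₂ t)` for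
`t < π/(2 C₁ C₂)`. -/
theorem stmt_1 (C₁ C₂ : ℝ) (hC₁ : 0 < C₁) (hC₂ : 0 < C₂)
    (g g' : ℝ → ℝ)
    (hderiv : ∀ t, HasDerivAt g (g' t) t)
    (hcont : Continuous g')
    (h0 : g 0 = 0)
    (hnn : ∀ t, 0 ≤ t → 0 ≤ g t)
    (hineq : ∀ t, 0 ≤ t → g' t ≤ C₁ ^ 2 * (g t) ^ 2 + C₂ ^ 2) :
    ∀ t, 0 ≤ t → t < π / (2 * C₁ * C₂) →
      g t ≤ (C₂ / C₁) * Real.tan (C₁ * C₂ * t) := by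
  intro t ht htlt
  set φ : ℝ → ℝ := fun s => Real.arctan (C₁ / C₂ * g s) with hφ
  have hφderiv : ∀ s, HasDerivAt φ
      ((1 / (1 + (C₁ / C₂ * g s) ^ 2)) * (C₁ / C₂ * g' s)) s := by
    intro s
    exact (Real.hasDerivAt_arctan (C₁ / C₂ * g s)).comp s ((hderiv s).const_mul (C₁ / C₂))
  set ψ : ℝ → ℝ := fun s => C₁ * C₂ * s - φ s with hψ
  have hψderiv : ∀ s, HasDerivAt ψ
      (C₁ * C₂ - (1 / (1 + (C₁ / C₂ * g s) ^ 2)) * (C₁ / C₂ * g' s)) s := by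
    intro s
    have h := ((hasDerivAt_id s).const_mul (C₁ * C₂)).sub (hφderiv s)
    rw [mul_one] at h
    exact h
  have hmono : MonotoneOn ψ (Set.Ici (0 : ℝ)) := by
    apply monotoneOn_of_deriv_nonneg (convex_Ici 0)
    · have hgc : Continuous g := by
        rw [continuous_iff_continuousAt]
        exact fun x => (hderiv x).continuousAt
      exact (Continuous.continuousOn (by simp only [hψ, hφ]; exact (continuous_const.mul continuous_id).sub (Real.continuous_arctan.comp (continuous_const.mul hgc))))
    · intro x _
      exact ((hψderiv x).differentiableAt).differentiableWithinAt
    · intro x hx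
      rw [interior_Ici] at hx
      rw [(hψderiv x).deriv]
      have hx0 : (0:ℝ) ≤ x := le_of_lt hx
      have hg := hnn x hx0
      have hi := hineq x hx0
      have hpos : 0 < 1 + (C₁ / C₂ * g x) ^ 2 := by positivity
      rw [sub_nonneg, one_div, ← div_eq_inv_mul, div_le_iff₀ hpos]
      have h1 : C₁ / C₂ * g' x ≤ C₁ / C₂ * (C₁ ^ 2 * g x ^ 2 + C₂ ^ 2) := by
        apply mul_le_mul_of_nonneg_left hi (by positivity)
      calc C₁ / C₂ * g' x ≤ C₁ / C₂ * (C₁ ^ 2 * g x ^ 2 + C₂ ^ 2) := h1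
        _ = C₁ * C₂ * (1 + (C₁ / C₂ * g x) ^ 2) := by
            field_simp
            ring
  have hφt : φ t ≤ C₁ * C₂ * t := by
    have := hmono (Set.self_mem_Ici) (Set.mem_Ici.mpr ht) ht
    have hψ0 : ψ 0 = 0 := by simp [hψ, hφ, h0]
    rw [hψ0] at this
    simpa [hψ, sub_nonneg] using this
  have hlt2 : C₁ * C₂ * t < π / 2 := by
    rw [lt_div_iff₀ (by positivity)] at htlt
    nlinarith
  have hmem1 : φ t ∈ Set.Ioo (-(π/2)) (π/2) := ⟨Real.neg_pi_div_two_lt_arctan _, Real.arctan_lt_pi_div_two _⟩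
  have hmem2 : C₁ * C₂ * t ∈ Set.Ioo (-(π/2)) (π/2) := by
    constructor
    · have : (0:ℝ) ≤ C₁ * C₂ * t := by positivity
      linarith [Real.pi_pos]
    · exact hlt2
  have htan : Real.tan (φ t) ≤ Real.tan (C₁ * C₂ * t) :=
    Real.strictMonoOn_tan.monotoneOn hmem1 hmem2 hφt
  rw [hφ] at htan
  simp only [Real.tan_arctan] at htan
  calc g t = (C₁ / C₂ * g t) / (C₁ / C₂) := by field_simp
      _ ≤ Real.tan (C₁ * C₂ * t) / (C₁/C₂) := by
          apply div_le_div_of_nonneg_right _ (by positivity)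
          · exact htan
      _ = (C₂ / C₁) * Real.tan (C₁ * C₂ * t) := by
          field_simp
end

section
/- For the boundary-layer profile matrix M(Z) = −e^{−Z}(cos(Z)·E + sin(Z)·cosγ·E₁H₀), where E is the 2×2 identity, E₁ = [[0,1],[-1,0]], H₀ = [[1+a²,ab],[ab,1+b²]] and cos γ = (1+a²+b²)^{-1/2}, the function u(Z) = M(Z/√2)·w (for any fixed w ∈ ℝ²) satisfies the ODE H₀ u'' + cos⁻¹γ · E₁ u = 0 with u(0) = −w and u(Z) → 0 as Z → +∞. -/
open Matrix

noncomputable section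

/-- `E₁ = [[0,1],[-1,0]]`. -/
def E₁ : Matrix (Fin 2) (Fin 2) ℝ := !![0, 1; -1, 0]

/-- `H₀ = [[1+a², ab],[ab, 1+b²]]`. -/
def H₀ (a b : ℝ) : Matrix (Fin 2) (Fin 2) ℝ :=
  !![1 + a ^ 2, a * b; a * b, 1 + b ^ 2]

/-- `cos γ = (1+a²+b²)^{-1/2}`. -/
def cosγ (a b : ℝ) : ℝ := (Real.sqrt (1 + a ^ 2 + b ^ 2))⁻¹

/-- Ekman boundary-layer profile matrix
`M(Z) = −e^{−Z}(cos Z · E + sin Z · cos γ · E₁H₀)`. -/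
def Mprof (a b : ℝ) (Z : ℝ) : Matrix (Fin 2) (Fin 2) ℝ :=
  -(Real.exp (-Z)) •
    (Real.cos Z • (1 : Matrix (Fin 2) (Fin 2) ℝ)
      + (Real.sin Z * cosγ a b) • (E₁ * H₀ a b))

/-! ### Auxiliary lemmas -/

def vv (a b : ℝ) (w : Fin 2 → ℝ) : Fin 2 → ℝ := (E₁ * H₀ a b) *ᵥ w

lemma u_eq (a b : ℝ) (w : Fin 2 → ℝ) (t : ℝ) :
    Mprof a b t *ᵥ w = (-(Real.exp (-t) * Real.cos t)) • w
      + (-(Real.exp (-t) * Real.sin t * cosγ a b)) • vv a b w := by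
  simp only [Mprof, vv, neg_smul, Matrix.neg_mulVec, Matrix.add_mulVec,
    smul_mulVec, Matrix.one_mulVec, smul_smul]
  module

def U1 (a b : ℝ) (w : Fin 2 → ℝ) (Z : ℝ) : Fin 2 → ℝ :=
  ((Real.sqrt 2)⁻¹ * (Real.exp (-(Z / Real.sqrt 2)) *
      (Real.cos (Z / Real.sqrt 2) + Real.sin (Z / Real.sqrt 2)))) • w
  + ((Real.sqrt 2)⁻¹ * cosγ a b * (Real.exp (-(Z / Real.sqrt 2)) *
      (Real.sin (Z / Real.sqrt 2) - Real.cos (Z / Real.sqrt 2)))) • vv a b w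

def U2 (a b : ℝ) (w : Fin 2 → ℝ) (Z : ℝ) : Fin 2 → ℝ :=
  (-(Real.exp (-(Z / Real.sqrt 2)) * Real.sin (Z / Real.sqrt 2))) • w
  + (cosγ a b * (Real.exp (-(Z / Real.sqrt 2)) * Real.cos (Z / Real.sqrt 2))) • vv a b w

lemma hU1 (a b : ℝ) (w : Fin 2 → ℝ) (Z : ℝ) :
    HasDerivAt (fun s : ℝ => Mprof a b (s / Real.sqrt 2) *ᵥ w) (U1 a b w Z) Z := by
  simp only [u_eq]
  have hA : HasDerivAt (fun s : ℝ => Real.exp (-(s / Real.sqrt 2)))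
      (Real.exp (-(Z / Real.sqrt 2)) * -(1 / Real.sqrt 2)) Z :=
    (((hasDerivAt_id Z).div_const _).neg).exp
  have hB : HasDerivAt (fun s : ℝ => Real.cos (s / Real.sqrt 2))
      (-Real.sin (Z / Real.sqrt 2) * (1 / Real.sqrt 2)) Z :=
    ((hasDerivAt_id Z).div_const _).cos
  have hC : HasDerivAt (fun s : ℝ => Real.sin (s / Real.sqrt 2))
      (Real.cos (Z / Real.sqrt 2) * (1 / Real.sqrt 2)) Z :=
    ((hasDerivAt_id Z).div_const _).sin
  have h := ((hA.mul hB).neg.smul_const w).add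
    (((hA.mul hC).mul_const (cosγ a b)).neg.smul_const (vv a b w))
  refine h.congr_deriv ?_
  unfold U1
  match_scalars <;> ring

lemma hU2 (a b : ℝ) (w : Fin 2 → ℝ) (Z : ℝ) :
    HasDerivAt (U1 a b w) (U2 a b w Z) Z := by
  have h2 : Real.sqrt 2 * Real.sqrt 2 = 2 := Real.mul_self_sqrt (by norm_num)
  have h0 : Real.sqrt 2 ≠ 0 := by positivity
  have hA : HasDerivAt (fun s : ℝ => Real.exp (-(s / Real.sqrt 2)))
      (Real.exp (-(Z / Real.sqrt 2)) * -(1 / Real.sqrt 2)) Z :=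
    (((hasDerivAt_id Z).div_const _).neg).exp
  have hB : HasDerivAt (fun s : ℝ => Real.cos (s / Real.sqrt 2))
      (-Real.sin (Z / Real.sqrt 2) * (1 / Real.sqrt 2)) Z :=
    ((hasDerivAt_id Z).div_const _).cos
  have hC : HasDerivAt (fun s : ℝ => Real.sin (s / Real.sqrt 2))
      (Real.cos (Z / Real.sqrt 2) * (1 / Real.sqrt 2)) Z :=
    ((hasDerivAt_id Z).div_const _).sin
  have h := (((hA.mul (hB.add hC)).const_mul ((Real.sqrt 2)⁻¹)).smul_const w).add
    (((hA.mul (hC.sub hB)).const_mul ((Real.sqrt 2)⁻¹ * cosγ a b)).smul_const (vv a b w))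
  refine h.congr_deriv ?_
  unfold U2
  simp only [Pi.add_apply, Pi.sub_apply]
  match_scalars <;> field_simp <;> ring_nf <;>
    simp only [Real.sq_sqrt (by norm_num : (0:ℝ) ≤ 2)] <;> ring_nf

lemma cosγ_pos (a b : ℝ) : 0 < cosγ a b := by
  have : (0:ℝ) < 1 + a ^ 2 + b ^ 2 := by positivity
  unfold cosγ; positivity

lemma inv_cosγ_sq (a b : ℝ) : ((cosγ a b)⁻¹) ^ 2 = 1 + a ^ 2 + b ^ 2 := by
  have h : (0:ℝ) ≤ 1 + a ^ 2 + b ^ 2 := by positivity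
  rw [cosγ, inv_inv, Real.sq_sqrt h]

lemma key_sq (a b : ℝ) :
    (E₁ * H₀ a b) ^ 2 = -(((cosγ a b)⁻¹) ^ 2) • (1 : Matrix (Fin 2) (Fin 2) ℝ) := by
  rw [inv_cosγ_sq, pow_two]
  ext i j
  fin_cases i <;> fin_cases j <;>
    simp [E₁, H₀, Matrix.mul_apply, Fin.sum_univ_two, Matrix.one_apply] <;> ring

lemma key_H₀E₁H₀ (a b : ℝ) :
    H₀ a b * (E₁ * H₀ a b) = (((cosγ a b)⁻¹) ^ 2) • E₁ := by
  rw [inv_cosγ_sq]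
  ext i j
  fin_cases i <;> fin_cases j <;>
    simp [E₁, H₀, Matrix.mul_apply, Fin.sum_univ_two] <;> ring

lemma key_E₁E₁H₀ (a b : ℝ) : E₁ * (E₁ * H₀ a b) = -(H₀ a b) := by
  ext i j
  fin_cases i <;> fin_cases j <;>
    simp [E₁, H₀, Matrix.mul_apply, Fin.sum_univ_two]

lemma ode (a b : ℝ) (w : Fin 2 → ℝ) (Z : ℝ) :
    H₀ a b *ᵥ U2 a b w Z
      + (cosγ a b)⁻¹ • (E₁ *ᵥ (Mprof a b (Z / Real.sqrt 2) *ᵥ w)) = 0 := by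
  have hc : cosγ a b ≠ 0 := (cosγ_pos a b).ne'
  rw [u_eq]
  simp only [U2, vv, Matrix.mulVec_add, Matrix.mulVec_smul, Matrix.mulVec_mulVec,
    key_H₀E₁H₀, key_E₁E₁H₀, smul_mulVec, Matrix.neg_mulVec, smul_add,
    smul_smul, smul_neg]
  match_scalars <;> field_simp <;> ring

lemma init (a b : ℝ) (w : Fin 2 → ℝ) : Mprof a b (0 / Real.sqrt 2) *ᵥ w = -w := by
  rw [u_eq]
  norm_num

lemma decay (a b : ℝ) (w : Fin 2 → ℝ) :
    Filter.Tendsto (fun Z : ℝ => Mprof a b (Z / Real.sqrt 2) *ᵥ w)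
      Filter.atTop (nhds 0) := by
  have hE : Filter.Tendsto (fun Z : ℝ => Real.exp (-(Z / Real.sqrt 2)))
      Filter.atTop (nhds 0) := by
    apply Real.tendsto_exp_atBot.comp
    apply Filter.tendsto_neg_atBot_iff.mpr
    exact Filter.Tendsto.atTop_div_const (by positivity) Filter.tendsto_id
  have hf : Filter.Tendsto
      (fun Z : ℝ => -(Real.exp (-(Z / Real.sqrt 2)) * Real.cos (Z / Real.sqrt 2)))
      Filter.atTop (nhds 0) := by
    refine squeeze_zero_norm (fun t => ?_) hE
    rw [norm_neg, Real.norm_eq_abs, abs_mul, Real.abs_exp]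
    exact mul_le_of_le_one_right (Real.exp_pos _).le (Real.abs_cos_le_one _)
  have hg : Filter.Tendsto
      (fun Z : ℝ => -(Real.exp (-(Z / Real.sqrt 2)) * Real.sin (Z / Real.sqrt 2) * cosγ a b))
      Filter.atTop (nhds 0) := by
    have hE' : Filter.Tendsto (fun Z : ℝ => Real.exp (-(Z / Real.sqrt 2)) * cosγ a b)
        Filter.atTop (nhds 0) := by
      simpa using hE.mul_const (cosγ a b)
    refine squeeze_zero_norm (fun t => ?_) hE'
    rw [norm_neg, Real.norm_eq_abs, abs_mul, abs_mul, Real.abs_exp,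
      abs_of_pos (cosγ_pos a b)]
    exact mul_le_mul_of_nonneg_right
      (mul_le_of_le_one_right (Real.exp_pos _).le (Real.abs_sin_le_one _)) (cosγ_pos a b).le
  have h := (hf.smul_const w).add (hg.smul_const (vv a b w))
  simp only [u_eq]
  simpa using h

/-- The boundary-layer profile `u(Z) = M(Z/√2) w` solves
`H₀ u'' + cos⁻¹γ E₁ u = 0`, `u(0) = −w`, `u(Z) → 0` as `Z → ∞`; and
`(E₁H₀)² = −cos⁻²γ · E`. -/
theorem stmt_13 (a b : ℝ) (w : Fin 2 → ℝ) :
    ((E₁ * H₀ a b) ^ 2 = -(((cosγ a b)⁻¹) ^ 2) • (1 : Matrix (Fin 2) (Fin 2) ℝ)) ∧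
    (∀ Z : ℝ,
      (H₀ a b) *ᵥ
          (deriv (deriv (fun s : ℝ => (Mprof a b (s / Real.sqrt 2)) *ᵥ w)) Z)
        + (cosγ a b)⁻¹ • (E₁ *ᵥ ((Mprof a b (Z / Real.sqrt 2)) *ᵥ w)) = 0) ∧
    ((Mprof a b (0 / Real.sqrt 2)) *ᵥ w = -w) ∧
    Filter.Tendsto (fun Z : ℝ => (Mprof a b (Z / Real.sqrt 2)) *ᵥ w)
      Filter.atTop (nhds 0) := by
  refine ⟨key_sq a b, fun Z => ?_, init a b w, decay a b w⟩
  have hd1 : deriv (fun s : ℝ => Mprof a b (s / Real.sqrt 2) *ᵥ w) = U1 a b w :=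
    funext fun t => (hU1 a b w t).deriv
  rw [hd1, (hU2 a b w Z).deriv]
  exact ode a b w Z

end
end
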